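/- Let α > 2, β ≥ 0, c > 0, N ∈ ℕ, and let w = (w_{jk})_{-N≤j,k≤N} be a complex (2N+1)×(2N+1) matrix whose columns w_k satisfy |⟨w_{j'}, w_{j''}⟩ - δ_{j'j''}| ≤ ε_{j'j''} with ε_{j'j''} = c e^{-β|j'-j''|}/(⟨j'⟩⟨j''⟩(N+1)²⟨j'-j''⟩^{α-1}). Then for all sufficiently large N there exists a unitary matrix U = (u_{jk}) ∈ U(2N+1) such that |u_{jk} - w_{jk}| ≤ σ_k |w_{jk}| + ∑_{-|k|≤l<|k|, l≠k} 4 ε_{lk} |w_{jl}|, where σ_k = 4 ∑_{|l|≤|k|} ε_{lk}. -/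

import Mathlib

open scoped ComplexConjugate

/-- ⟨k⟩ = |k| + 1 -/
noncomputable def br (k : ℤ) : ℝ := |(k : ℝ)| + 1

/-- ε_{jk} = c e^{-β|j-k|} / (⟨j⟩⟨k⟩(N+1)²⟨j-k⟩^{α-1}) -/
noncomputable def eps (c β α : ℝ) (N : ℕ) (j k : ℤ) : ℝ :=
  c * Real.exp (-β * |((j - k : ℤ) : ℝ)|) /
    (br j * br k * ((N : ℝ) + 1) ^ 2 * br (j - k) ^ (α - 1))

def rk (k : ℤ) : ℕ := if k < 0 then 2 * k.natAbs else 2 * k.natAbs + 1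

lemma rk_lt_iff (l k : ℤ) : rk l < rk k ↔ (-|k| ≤ l ∧ l < |k| ∧ l ≠ k) := by
  simp only [rk, Int.abs_eq_natAbs]
  split_ifs <;> omega

lemma rk_inj {l k : ℤ} (h : rk l = rk k) : l = k := by
  simp only [rk] at h
  split_ifs at h <;> omega

lemma one_le_br (k : ℤ) : 1 ≤ br k := by
  simp only [br]; linarith [abs_nonneg ((k:ℝ))]

lemma br_pos (k : ℤ) : 0 < br k := lt_of_lt_of_le one_pos (one_le_br k)

lemma one_le_brpow (α : ℝ) (hα : 2 < α) (k : ℤ) : 1 ≤ br k ^ (α - 1) := by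
  calc (1:ℝ) = 1 ^ (α - 1) := (Real.one_rpow _).symm
    _ ≤ br k ^ (α - 1) := Real.rpow_le_rpow zero_le_one (one_le_br k) (by linarith)

lemma brpow_pos (α : ℝ) (k : ℤ) : 0 < br k ^ (α - 1) := Real.rpow_pos_of_pos (br_pos k) _

lemma eps_pos (c β α : ℝ) (N : ℕ) (hc : 0 < c) (j k : ℤ) : 0 < eps c β α N j k := by
  have := br_pos j; have := br_pos k; have := brpow_pos α (j - k)
  have hN : (0:ℝ) < ((N:ℝ)+1)^2 := by positivity
  exact div_pos (mul_pos hc (Real.exp_pos _)) (by positivity)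

lemma eps_symm (c β α : ℝ) (N : ℕ) (j k : ℤ) : eps c β α N j k = eps c β α N k j := by
  have h1 : ((j - k : ℤ) : ℝ) = -((k - j : ℤ) : ℝ) := by push_cast; ring
  have h2 : br (j - k) = br (k - j) := by rw [br, br, h1, abs_neg]
  rw [eps, eps, h1, abs_neg, h2, mul_comm (br j) (br k)]

lemma eps_le (c β α : ℝ) (N : ℕ) (hc : 0 < c) (hβ : 0 ≤ β) (hα : 2 < α) (j k : ℤ) :
    eps c β α N j k ≤ c / ((N:ℝ)+1)^2 := by
  have hN : (0:ℝ) < ((N:ℝ)+1)^2 := by positivity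
  have harg : -β * |((j - k : ℤ) : ℝ)| ≤ 0 := by
    have := mul_nonneg hβ (abs_nonneg ((( j - k : ℤ)) : ℝ)); linarith
  have hnum : c * Real.exp (-β * |((j - k : ℤ) : ℝ)|) ≤ c := by
    nlinarith [Real.exp_le_one_iff.mpr harg, Real.exp_pos (-β * |((j - k : ℤ) : ℝ)|)]
  have hden : ((N:ℝ)+1)^2 ≤ br j * br k * ((N : ℝ) + 1) ^ 2 * br (j - k) ^ (α - 1) := by
    have hjk : 1 ≤ br j * br k := by nlinarith [one_le_br j, one_le_br k]
    have h1 : ((N:ℝ)+1)^2 ≤ br j * br k * ((N:ℝ)+1)^2 := le_mul_of_one_le_left hN.le hjk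
    exact h1.trans (le_mul_of_one_le_right
      (le_of_lt (mul_pos (mul_pos (br_pos j) (br_pos k)) hN)) (one_le_brpow α hα (j - k)))
  rw [eps]
  exact div_le_div₀ (le_of_lt hc) hnum hN hden

lemma eps_mul (c β α : ℝ) (N : ℕ) (hc : 0 < c) (hβ : 0 ≤ β) (hα : 2 < α) (m l k : ℤ) :
    eps c β α N m l * eps c β α N m k ≤ c / ((N:ℝ)+1)^2 * eps c β α N l k := by
  have hbm := one_le_br m; have hbl := one_le_br l; have hbk := one_le_br k
  have hN : (0:ℝ) < ((N:ℝ)+1)^2 := by positivity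
  have habs : |((l - k : ℤ) : ℝ)| ≤ |((m - l : ℤ) : ℝ)| + |((m - k : ℤ) : ℝ)| := by
    push_cast
    calc |(l:ℝ) - k| = |((m:ℝ) - k) - ((m:ℝ) - l)| := by ring_nf
      _ ≤ |(m:ℝ) - k| + |(m:ℝ) - l| := abs_sub _ _
      _ = |(m:ℝ) - l| + |(m:ℝ) - k| := by ring
  have hexp : Real.exp (-β * |((m - l : ℤ) : ℝ)|) * Real.exp (-β * |((m - k : ℤ) : ℝ)|)
      ≤ Real.exp (-β * |((l - k : ℤ) : ℝ)|) := by
    rw [← Real.exp_add]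
    apply Real.exp_le_exp.mpr
    nlinarith
  have hbr : br (l - k) ≤ br (m - l) * br (m - k) := by
    have h1 : (0:ℝ) ≤ |((m - l : ℤ) : ℝ)| := abs_nonneg _
    have h2 : (0:ℝ) ≤ |((m - k : ℤ) : ℝ)| := abs_nonneg _
    simp only [br]
    push_cast at habs ⊢
    nlinarith [mul_nonneg (abs_nonneg ((m:ℝ)-(l:ℝ))) (abs_nonneg ((m:ℝ)-(k:ℝ))),
      abs_nonneg ((m:ℝ)-(l:ℝ)), abs_nonneg ((m:ℝ)-(k:ℝ))]
  have hpow : br (l - k) ^ (α - 1) ≤ br (m - l) ^ (α - 1) * br (m - k) ^ (α - 1) := by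
    rw [← Real.mul_rpow (le_of_lt (br_pos _)) (le_of_lt (br_pos _))]
    exact Real.rpow_le_rpow (le_of_lt (br_pos _)) hbr (by linarith)
  -- now combine
  have e1 : (0:ℝ) < br (m - l) ^ (α - 1) := brpow_pos _ _
  have e2 : (0:ℝ) < br (m - k) ^ (α - 1) := brpow_pos _ _
  have e3 : (0:ℝ) < br (l - k) ^ (α - 1) := brpow_pos _ _
  rw [eps, eps, eps, div_mul_div_comm, div_mul_div_comm]
  apply div_le_div₀ (by positivity)
  · calc c * Real.exp (-β * |((m - l : ℤ) : ℝ)|) * (c * Real.exp (-β * |((m - k : ℤ) : ℝ)|))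
        = c * c * (Real.exp (-β * |((m - l : ℤ) : ℝ)|) * Real.exp (-β * |((m - k : ℤ) : ℝ)|)) := by ring
      _ ≤ c * c * Real.exp (-β * |((l - k : ℤ) : ℝ)|) := by nlinarith [Real.exp_pos (-β * |((l - k : ℤ) : ℝ)|)]
      _ = c * (c * Real.exp (-β * |((l - k : ℤ) : ℝ)|)) := by ring
  · exact mul_pos hN (mul_pos (mul_pos (mul_pos (br_pos l) (br_pos k)) hN) e3)
  · -- denominator comparison
    have h1m : 1 ≤ br m * br m := by nlinarith
    have key : br (l - k) ^ (α - 1) ≤ br m * br m * (br (m - l) ^ (α - 1) * br (m - k) ^ (α - 1)) :=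
      hpow.trans (le_mul_of_one_le_left (le_of_lt (mul_pos e1 e2)) h1m)
    have hQ : (0:ℝ) ≤ br l * br k * (((N:ℝ)+1)^2*((N:ℝ)+1)^2) :=
      le_of_lt (mul_pos (mul_pos (br_pos l) (br_pos k)) (mul_pos hN hN))
    calc ((N:ℝ)+1)^2 * (br l * br k * ((N : ℝ) + 1) ^ 2 * br (l - k) ^ (α - 1))
        = (br l * br k * (((N:ℝ)+1)^2*((N:ℝ)+1)^2)) * br (l - k) ^ (α - 1) := by ring
      _ ≤ (br l * br k * (((N:ℝ)+1)^2*((N:ℝ)+1)^2)) *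
            (br m * br m * (br (m - l) ^ (α - 1) * br (m - k) ^ (α - 1))) :=
          mul_le_mul_of_nonneg_left key hQ
      _ = br m * br l * ((N : ℝ) + 1) ^ 2 * br (m - l) ^ (α - 1) *
            (br m * br k * ((N : ℝ) + 1) ^ 2 * br (m - k) ^ (α - 1)) := by ring

noncomputable def AUip {n : Type*} [Fintype n] (x y : n → ℂ) : ℂ :=
  ∑ i, conj (x i) * y i

lemma AUip_self {n : Type*} [Fintype n] (x : n → ℂ) :
    AUip x x = ((∑ i, Complex.normSq (x i) : ℝ) : ℂ) := by
  simp [AUip, Complex.normSq_eq_conj_mul_self]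

lemma AUip_conj {n : Type*} [Fintype n] (x y : n → ℂ) : AUip x y = conj (AUip y x) := by
  simp [AUip, map_sum, mul_comm]

lemma AUip_right_expand {n γ : Type*} [Fintype n] (x W' : n → ℂ) (s : Finset γ)
    (cf : γ → ℂ) (g : γ → n → ℂ) :
    AUip x (fun j => W' j - ∑ l ∈ s, cf l * g l j)
      = AUip x W' - ∑ l ∈ s, cf l * AUip x (g l) := by
  simp only [AUip, mul_sub, Finset.sum_sub_distrib, Finset.mul_sum]
  congr 1
  rw [Finset.sum_comm]
  exact Finset.sum_congr rfl fun l _ => Finset.sum_congr rfl fun i _ => by ring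

lemma AUip_left_expand {n γ : Type*} [Fintype n] (x W' : n → ℂ) (s : Finset γ)
    (cf : γ → ℂ) (g : γ → n → ℂ) :
    AUip (fun j => W' j - ∑ l ∈ s, cf l * g l j) x
      = AUip W' x - ∑ l ∈ s, conj (cf l) * AUip (g l) x := by
  simp only [AUip, map_sub, map_sum, map_mul, sub_mul, Finset.sum_sub_distrib, Finset.mul_sum,
    Finset.sum_mul]
  congr 1
  rw [Finset.sum_comm]
  exact Finset.sum_congr rfl fun l _ => Finset.sum_congr rfl fun i _ => by ring

lemma AUip_smul_right {n : Type*} [Fintype n] (x y : n → ℂ) (a : ℂ) :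
    AUip x (fun j => a * y j) = a * AUip x y := by
  simp only [AUip, Finset.mul_sum]
  exact Finset.sum_congr rfl fun i _ => by ring

lemma AUip_smul_left {n : Type*} [Fintype n] (x y : n → ℂ) (a : ℂ) :
    AUip (fun j => a * y j) x = conj a * AUip y x := by
  simp only [AUip, map_mul, Finset.mul_sum]
  exact Finset.sum_congr rfl fun i _ => by ring

noncomputable def gsC {n : Type*} [Fintype n] (ρ : n → ℕ) (W : n → n → ℂ) (k : n) : n → ℂ :=
  fun j =>
    ((Real.sqrt (∑ i, Complex.normSq
        (W k i - ∑ l ∈ (Finset.univ.filter fun l => ρ l < ρ k).attach,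
            AUip (gsC ρ W l.1) (W k) * gsC ρ W l.1 i)))⁻¹ : ℝ) *
    (W k j - ∑ l ∈ (Finset.univ.filter fun l => ρ l < ρ k).attach,
        AUip (gsC ρ W l.1) (W k) * gsC ρ W l.1 j)
termination_by ρ k
decreasing_by all_goals exact (Finset.mem_filter.mp l.2).2

noncomputable def gsV {n : Type*} [Fintype n] (ρ : n → ℕ) (W : n → n → ℂ) (k : n) : n → ℂ :=
  fun j => W k j - ∑ l ∈ Finset.univ.filter fun l => ρ l < ρ k,
      AUip (gsC ρ W l) (W k) * gsC ρ W l j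

lemma gsC_eq {n : Type*} [Fintype n] (ρ : n → ℕ) (W : n → n → ℂ) (k : n) (j : n) :
    gsC ρ W k j = ((Real.sqrt (∑ i, Complex.normSq (gsV ρ W k i)))⁻¹ : ℝ) * gsV ρ W k j := by
  rw [gsC]
  simp only [gsV]
  rw [Finset.sum_attach _ (fun l => AUip (gsC ρ W l) (W k) * gsC ρ W l j),
    Finset.sum_congr rfl (fun i _ => by rw [Finset.sum_attach _ (fun l => AUip (gsC ρ W l) (W k) * gsC ρ W l i)])]

lemma AUsplit_sum {n : Type*} [Fintype n] [DecidableEq n] (ρ : n → ℕ) (l : n) (A : ℝ)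
    (B C : n → ℝ) :
    ∑ m, (if m = l then A else if ρ m < ρ l then B m else 0) * C m
      = A * C l + ∑ m ∈ Finset.univ.filter (fun m => ρ m < ρ l), B m * C m := by
  have hpt : ∀ m, (if m = l then A else if ρ m < ρ l then B m else 0) * C m
      = (if m = l then A * C m else 0) + (if ρ m < ρ l then B m * C m else 0) := by
    intro m
    by_cases h1 : m = l
    · subst h1; simp [lt_irrefl]
    · by_cases h2 : ρ m < ρ l <;> simp [h1, h2]
  rw [Finset.sum_congr rfl (fun m _ => hpt m), Finset.sum_add_distrib,
    Finset.sum_ite_eq' Finset.univ l (fun m => A * C m), if_pos (Finset.mem_univ l),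
    ← Finset.sum_filter]

set_option maxHeartbeats 1000000 in
lemma AUkey {n : Type*} [Fintype n] [DecidableEq n] (ρ : n → ℕ) (hρ : Function.Injective ρ)
    (ε : n → n → ℝ) (W : n → n → ℂ)
    (hεpos : ∀ a b, 0 < ε a b) (hεsymm : ∀ a b, ε a b = ε b a)
    (hεsmall : ∀ a b, ε a b ≤ 1/32)
    (hconv : ∀ a b, (∑ m, ε m a * ε m b) ≤ (1/16) * ε a b)
    (hw : ∀ a b, ‖AUip (W a) (W b) - (if a = b then 1 else 0)‖ ≤ ε a b) :
    ∀ k, (AUip (gsC ρ W k) (gsC ρ W k) = 1) ∧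
      (∀ l, ρ l < ρ k → AUip (gsC ρ W l) (gsC ρ W k) = 0) ∧
      (∀ k', ρ k < ρ k' → ‖AUip (gsC ρ W k) (W k')‖ ≤ 2 * ε k k') ∧
      (∀ j, ‖gsC ρ W k j - W k j‖ ≤ 4 * ε k k * ‖W k j‖ +
        ∑ m ∈ Finset.univ.filter (fun m => ρ m < ρ k), 4 * ε m k * ‖W m j‖) := by
  have hεnn : ∀ a b, 0 ≤ ε a b := fun a b => (hεpos a b).le
  have hG : ∀ a b, a ≠ b → ‖AUip (W a) (W b)‖ ≤ ε a b := by
    intro a b hab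
    have := hw a b
    rwa [if_neg hab, sub_zero] at this
  suffices H : ∀ r : ℕ, ∀ k, ρ k < r →
      (AUip (gsC ρ W k) (gsC ρ W k) = 1) ∧
      (∀ l, ρ l < ρ k → AUip (gsC ρ W l) (gsC ρ W k) = 0) ∧
      (∀ k', ρ k < ρ k' → ‖AUip (gsC ρ W k) (W k')‖ ≤ 2 * ε k k') ∧
      (∀ j, ‖gsC ρ W k j - W k j‖ ≤ 4 * ε k k * ‖W k j‖ +
        ∑ m ∈ Finset.univ.filter (fun m => ρ m < ρ k), 4 * ε m k * ‖W m j‖) by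
    exact fun k => H (ρ k + 1) k (Nat.lt_succ_self _)
  intro r
  induction r using Nat.strong_induction_on with
  | _ r IH =>
  intro k hkr
  set F : Finset n := Finset.univ.filter (fun m => ρ m < ρ k) with hF
  have hmemF : ∀ {l}, l ∈ F → ρ l < ρ k := fun hl => (Finset.mem_filter.mp hl).2
  have hmemF' : ∀ {l}, ρ l < ρ k → l ∈ F := fun h =>
    Finset.mem_filter.mpr ⟨Finset.mem_univ _, h⟩
  have hpred : ∀ l ∈ F, (AUip (gsC ρ W l) (gsC ρ W l) = 1) ∧
      (∀ l', ρ l' < ρ l → AUip (gsC ρ W l') (gsC ρ W l) = 0) ∧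
      (∀ k', ρ l < ρ k' → ‖AUip (gsC ρ W l) (W k')‖ ≤ 2 * ε l k') ∧
      (∀ j, ‖gsC ρ W l j - W l j‖ ≤ 4 * ε l l * ‖W l j‖ +
        ∑ m ∈ Finset.univ.filter (fun m => ρ m < ρ l), 4 * ε m l * ‖W m j‖) := by
    intro l hl
    exact IH (ρ k) hkr l (hmemF hl)
  have hcl : ∀ l ∈ F, ‖AUip (gsC ρ W l) (W k)‖ ≤ 2 * ε l k := by
    intro l hl
    exact (hpred l hl).2.2.1 k (hmemF hl)
  have horth : ∀ l ∈ F, ∀ l' ∈ F, AUip (gsC ρ W l) (gsC ρ W l') = if l = l' then 1 else 0 := by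
    intro l hl l' hl'
    rcases lt_trichotomy (ρ l) (ρ l') with h | h | h
    · rw [if_neg (fun he => absurd (congrArg ρ he) (ne_of_lt h)), (hpred l' hl').2.1 l h]
    · have he : l = l' := hρ h
      rw [if_pos he, he]
      exact (hpred l' hl').1
    · have hne : l ≠ l' := fun he => absurd (congrArg ρ he) (ne_of_gt h)
      rw [if_neg hne, AUip_conj, (hpred l hl).2.1 l' h, map_zero]
  have hvfun : gsV ρ W k = fun j => W k j -
      ∑ l ∈ F, AUip (gsC ρ W l) (W k) * gsC ρ W l j := rfl
  have horthv : ∀ l ∈ F, AUip (gsC ρ W l) (gsV ρ W k) = 0 := by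
    intro l hl
    rw [hvfun, AUip_right_expand (gsC ρ W l) (W k) F
      (fun l' => AUip (gsC ρ W l') (W k)) (fun l' => gsC ρ W l')]
    rw [Finset.sum_congr rfl (fun l' hl' => by rw [horth l hl l' hl'])]
    simp only [mul_ite, mul_one, mul_zero]
    rw [Finset.sum_ite_eq F l (fun l' => AUip (gsC ρ W l') (W k)), if_pos hl, sub_self]
  -- inner product of v with itself
  have hipvv : AUip (gsV ρ W k) (gsV ρ W k)
      = AUip (W k) (W k) - ∑ l ∈ F, AUip (gsC ρ W l) (W k) * conj (AUip (gsC ρ W l) (W k)) := by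
    have e1 : AUip (gsV ρ W k) (gsV ρ W k) = AUip (W k) (gsV ρ W k) := by
      have h := AUip_left_expand (gsV ρ W k) (W k) F
        (fun l' => AUip (gsC ρ W l') (W k)) (fun l' => gsC ρ W l')
      rw [← hvfun] at h
      rw [h, Finset.sum_congr rfl (fun l hl => by rw [horthv l hl, mul_zero]),
        Finset.sum_const_zero, sub_zero]
    have e2 : AUip (W k) (gsV ρ W k) = AUip (W k) (W k) -
        ∑ l ∈ F, AUip (gsC ρ W l) (W k) * conj (AUip (gsC ρ W l) (W k)) := by
      have h := AUip_right_expand (W k) (W k) F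
        (fun l' => AUip (gsC ρ W l') (W k)) (fun l' => gsC ρ W l')
      rw [← hvfun] at h
      rw [h]
      congr 1
      exact Finset.sum_congr rfl fun l hl => by rw [AUip_conj (W k) (gsC ρ W l)]
    exact e1.trans e2
  have hvv1 : ‖AUip (gsV ρ W k) (gsV ρ W k) - 1‖ ≤ 2 * ε k k := by
    rw [hipvv]
    have h1 : ‖AUip (W k) (W k) - 1‖ ≤ ε k k := by
      have := hw k k; rwa [if_pos rfl] at this
    have h2 : ‖∑ l ∈ F, AUip (gsC ρ W l) (W k) * conj (AUip (gsC ρ W l) (W k))‖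
        ≤ ∑ l ∈ F, (2 * ε l k) * (2 * ε l k) := by
      refine (norm_sum_le _ _).trans (Finset.sum_le_sum fun l hl => ?_)
      rw [norm_mul, RCLike.norm_conj]
      exact mul_le_mul (hcl l hl) (hcl l hl) (norm_nonneg _) (mul_nonneg (by norm_num) (hεnn l k))
    have h3 : ∑ l ∈ F, (2 * ε l k) * (2 * ε l k) ≤ 4 * ((1/16) * ε k k) := by
      have : ∑ l ∈ F, (2 * ε l k) * (2 * ε l k) = 4 * ∑ l ∈ F, ε l k * ε l k := by
        rw [Finset.mul_sum]; exact Finset.sum_congr rfl fun l _ => by ring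
      rw [this]
      have hsub : ∑ l ∈ F, ε l k * ε l k ≤ ∑ l, ε l k * ε l k :=
        Finset.sum_le_sum_of_subset_of_nonneg (Finset.subset_univ F)
          (fun i _ _ => mul_nonneg (hεnn i k) (hεnn i k))
      have := hconv k k
      nlinarith [hεnn k k]
    rw [sub_right_comm]
    calc ‖(AUip (W k) (W k) - 1) -
          ∑ l ∈ F, AUip (gsC ρ W l) (W k) * conj (AUip (gsC ρ W l) (W k))‖
        ≤ ‖AUip (W k) (W k) - 1‖ +
          ‖∑ l ∈ F, AUip (gsC ρ W l) (W k) * conj (AUip (gsC ρ W l) (W k))‖ := norm_sub_le _ _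
      _ ≤ ε k k + 4 * ((1/16) * ε k k) := add_le_add h1 (h2.trans h3)
      _ ≤ 2 * ε k k := by linarith [hεnn k k]
  -- t, sqrt t and s bounds
  set t : ℝ := ∑ i, Complex.normSq (gsV ρ W k i) with htdef
  have htc : AUip (gsV ρ W k) (gsV ρ W k) = (t:ℂ) := AUip_self _
  have ht0 : 0 ≤ t := Finset.sum_nonneg fun i _ => Complex.normSq_nonneg _
  have hεkk : ε k k ≤ 1/32 := hεsmall k k
  have ht1 : |t - 1| ≤ 2 * ε k k := by
    have hcast : ‖((t:ℂ) - 1)‖ = |t - 1| := by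
      rw [show ((t:ℂ) - 1) = ((t - 1 : ℝ) : ℂ) by push_cast; ring]
      exact (Complex.norm_real _).trans (Real.norm_eq_abs _)
    rw [← hcast, ← htc]
    exact hvv1
  have ht116 : |t - 1| ≤ 1/16 := ht1.trans (by linarith)
  have hsq34 : 3/4 ≤ Real.sqrt t := by
    have h916 : (9/16:ℝ) ≤ t := by
      rcases abs_le.mp ht116 with ⟨h1, h2⟩; linarith
    rw [show (3/4:ℝ) = Real.sqrt (9/16) by
      rw [show (9/16:ℝ) = (3/4)^2 by norm_num, Real.sqrt_sq (by norm_num)]]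
    exact Real.sqrt_le_sqrt h916
  have hsqpos : 0 < Real.sqrt t := lt_of_lt_of_le (by norm_num) hsq34
  have hs0 : (0:ℝ) ≤ (Real.sqrt t)⁻¹ := inv_nonneg.mpr (Real.sqrt_nonneg t)
  have hs43 : (Real.sqrt t)⁻¹ ≤ 4/3 := by
    rw [show (4/3:ℝ) = (3/4:ℝ)⁻¹ by norm_num]
    exact inv_anti₀ (by norm_num) hsq34
  have hsa : (Real.sqrt t)⁻¹ * Real.sqrt t = 1 := inv_mul_cancel₀ (ne_of_gt hsqpos)
  have haa : Real.sqrt t * Real.sqrt t = t := Real.mul_self_sqrt ht0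
  have hs1 : |(Real.sqrt t)⁻¹ - 1| ≤ 2 * ε k k := by
    have e : (Real.sqrt t)⁻¹ - 1 = (Real.sqrt t)⁻¹ * (1 - Real.sqrt t) := by
      rw [mul_one_sub, hsa]
    have e3 : |1 - Real.sqrt t| * (1 + Real.sqrt t) = |t - 1| := by
      rw [show |t - 1| = |(1 - Real.sqrt t) * (1 + Real.sqrt t)| by
          rw [show (1 - Real.sqrt t) * (1 + Real.sqrt t) = -(t - 1) by
            rw [mul_comm]; nlinarith [haa], abs_neg],
        abs_mul, abs_of_pos (show (0:ℝ) < 1 + Real.sqrt t by linarith)]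
    have e2 : |(Real.sqrt t)⁻¹ - 1| * (1 + Real.sqrt t) = (Real.sqrt t)⁻¹ * |t - 1| := by
      rw [e, abs_mul, abs_of_nonneg hs0, mul_assoc, e3]
    nlinarith [abs_nonneg (t - 1), abs_nonneg ((Real.sqrt t)⁻¹ - 1), ht1, hεnn k k, hsq34, hs43]
  have hufun : gsC ρ W k = fun j => (((Real.sqrt t)⁻¹ : ℝ) : ℂ) * gsV ρ W k j := by
    funext j
    rw [gsC_eq]
  -- G4 : unit norm
  have hG4 : AUip (gsC ρ W k) (gsC ρ W k) = 1 := by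
    rw [hufun, AUip_smul_left, AUip_smul_right, htc, Complex.conj_ofReal]
    rw [show ((((Real.sqrt t)⁻¹:ℝ):ℂ) * ((((Real.sqrt t)⁻¹:ℝ):ℂ) * (t:ℂ)))
        = ((((Real.sqrt t)⁻¹ * ((Real.sqrt t)⁻¹ * t) : ℝ)):ℂ) by push_cast; ring]
    rw [show (Real.sqrt t)⁻¹ * ((Real.sqrt t)⁻¹ * t) = 1 by
      field_simp
      try exact haa.symm
      rw [Real.sq_sqrt ht0]]
    exact Complex.ofReal_one
  -- G3 : orthogonality with predecessors
  have hG3 : ∀ l, ρ l < ρ k → AUip (gsC ρ W l) (gsC ρ W k) = 0 := by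
    intro l hl
    rw [hufun, AUip_smul_right, horthv l (hmemF' hl), mul_zero]
  -- G2
  have hG2 : ∀ k', ρ k < ρ k' → ‖AUip (gsC ρ W k) (W k')‖ ≤ 2 * ε k k' := by
    intro k' hk'
    have hkk' : k ≠ k' := fun he => absurd (congrArg ρ he) (ne_of_lt hk')
    have hexp : AUip (gsV ρ W k) (W k') = AUip (W k) (W k') -
        ∑ l ∈ F, conj (AUip (gsC ρ W l) (W k)) * AUip (gsC ρ W l) (W k') := by
      have h := AUip_left_expand (W k') (W k) F
        (fun l' => AUip (gsC ρ W l') (W k)) (fun l' => gsC ρ W l')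
      rw [← hvfun] at h
      exact h
    have hb : ‖AUip (gsV ρ W k) (W k')‖ ≤ (5/4) * ε k k' := by
      rw [hexp]
      have h1 := hG k k' hkk'
      have h2 : ‖∑ l ∈ F, conj (AUip (gsC ρ W l) (W k)) * AUip (gsC ρ W l) (W k')‖
          ≤ ∑ l ∈ F, (2 * ε l k) * (2 * ε l k') := by
        refine (norm_sum_le _ _).trans (Finset.sum_le_sum fun l hl => ?_)
        rw [norm_mul, RCLike.norm_conj]
        exact mul_le_mul (hcl l hl) ((hpred l hl).2.2.1 k' (lt_trans (hmemF hl) hk'))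
          (norm_nonneg _) (mul_nonneg (by norm_num) (hεnn l k))
      have h3 : ∑ l ∈ F, (2 * ε l k) * (2 * ε l k') ≤ 4 * ((1/16) * ε k k') := by
        have he : ∑ l ∈ F, (2 * ε l k) * (2 * ε l k') = 4 * ∑ l ∈ F, ε l k * ε l k' := by
          rw [Finset.mul_sum]; exact Finset.sum_congr rfl fun l _ => by ring
        rw [he]
        have hsub : ∑ l ∈ F, ε l k * ε l k' ≤ ∑ l, ε l k * ε l k' :=
          Finset.sum_le_sum_of_subset_of_nonneg (Finset.subset_univ F)
            (fun i _ _ => mul_nonneg (hεnn i k) (hεnn i k'))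
        have := hconv k k'
        linarith
      calc ‖AUip (W k) (W k') -
            ∑ l ∈ F, conj (AUip (gsC ρ W l) (W k)) * AUip (gsC ρ W l) (W k')‖
          ≤ ‖AUip (W k) (W k')‖ +
            ‖∑ l ∈ F, conj (AUip (gsC ρ W l) (W k)) * AUip (gsC ρ W l) (W k')‖ := norm_sub_le _ _
        _ ≤ ε k k' + 4 * ((1/16) * ε k k') := add_le_add h1 (h2.trans h3)
        _ = (5/4) * ε k k' := by ring
    rw [hufun, AUip_smul_left, Complex.conj_ofReal, norm_mul]
    rw [show ‖(((Real.sqrt t)⁻¹:ℝ):ℂ)‖ = (Real.sqrt t)⁻¹ from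
      ((Complex.norm_real _).trans (Real.norm_eq_abs _)).trans (abs_of_nonneg hs0)]
    calc (Real.sqrt t)⁻¹ * ‖AUip (gsV ρ W k) (W k')‖ ≤ (4/3) * ((5/4) * ε k k') :=
        mul_le_mul hs43 hb (norm_nonneg _) (by norm_num)
      _ ≤ 2 * ε k k' := by nlinarith [hεnn k k']
  -- entrywise bound on predecessor columns
  have hentry : ∀ l ∈ F, ∀ j, ‖gsC ρ W l j‖ ≤
      ∑ m, (if m = l then 1 + 4 * ε l l else if ρ m < ρ l then 4 * ε m l else 0) * ‖W m j‖ := by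
    intro l hl j
    rw [AUsplit_sum ρ l (1 + 4 * ε l l) (fun m => 4 * ε m l) (fun m => ‖W m j‖)]
    have h1 : ‖gsC ρ W l j‖ ≤ ‖W l j‖ + ‖gsC ρ W l j - W l j‖ := by
      conv_lhs => rw [show gsC ρ W l j = W l j + (gsC ρ W l j - W l j) by ring]
      exact norm_add_le _ _
    have h2 := (hpred l hl).2.2.2 j
    calc ‖gsC ρ W l j‖ ≤ ‖W l j‖ + ‖gsC ρ W l j - W l j‖ := h1
      _ ≤ ‖W l j‖ + (4 * ε l l * ‖W l j‖ +
          ∑ m ∈ Finset.univ.filter (fun m => ρ m < ρ l), 4 * ε m l * ‖W m j‖) := by linarith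
      _ = (1 + 4 * ε l l) * ‖W l j‖ +
          ∑ m ∈ Finset.univ.filter (fun m => ρ m < ρ l), 4 * ε m l * ‖W m j‖ := by ring
  -- entrywise bound on v - W k
  have hvW : ∀ j, ‖gsV ρ W k j - W k j‖ ≤ ∑ m ∈ F, (5/2) * ε m k * ‖W m j‖ := by
    intro j
    have hv : gsV ρ W k j - W k j = -(∑ l ∈ F, AUip (gsC ρ W l) (W k) * gsC ρ W l j) := by
      rw [congrFun hvfun j]; ring
    rw [hv, norm_neg]
    have claim : ∀ m, (∑ l ∈ F, 2 * ε l k *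
        ((if m = l then 1 + 4 * ε l l else if ρ m < ρ l then 4 * ε m l else 0) * ‖W m j‖))
        ≤ (if ρ m < ρ k then (5/2) * ε m k * ‖W m j‖ else 0) := by
      intro m
      by_cases hm : ρ m < ρ k
      · rw [if_pos hm]
        have hterm : ∀ l ∈ F, 2 * ε l k *
            ((if m = l then 1 + 4 * ε l l else if ρ m < ρ l then 4 * ε m l else 0) * ‖W m j‖)
            ≤ (2 * ε l k * ((if m = l then 1 else 0) + 4 * ε m l)) * ‖W m j‖ := by
          intro l hl
          have hψ : (if m = l then 1 + 4 * ε l l else if ρ m < ρ l then 4 * ε m l else 0)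
              ≤ (if m = l then 1 else 0) + 4 * ε m l := by
            by_cases h1 : m = l
            · subst h1; simp
            · rw [if_neg h1, if_neg h1, zero_add]
              by_cases h2 : ρ m < ρ l
              · rw [if_pos h2]
              · rw [if_neg h2]; linarith [hεnn m l]
          have := mul_le_mul_of_nonneg_right hψ (norm_nonneg (W m j))
          nlinarith [hεnn l k, norm_nonneg (W m j)]
        have coefbound : (∑ l ∈ F, 2 * ε l k * ((if m = l then 1 else 0) + 4 * ε m l))
            ≤ (5/2) * ε m k := by
          have e : (∑ l ∈ F, 2 * ε l k * ((if m = l then 1 else 0) + 4 * ε m l))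
              = (∑ l ∈ F, if m = l then 2 * ε l k else 0) + ∑ l ∈ F, 8 * (ε l m * ε l k) := by
            rw [← Finset.sum_add_distrib]
            refine Finset.sum_congr rfl fun l _ => ?_
            by_cases h1 : m = l
            · subst h1; rw [if_pos rfl, if_pos rfl, hεsymm m m]; ring
            · rw [if_neg h1, if_neg h1, hεsymm m l]; ring
          rw [e]
          have p1 : (∑ l ∈ F, if m = l then 2 * ε l k else 0) ≤ 2 * ε m k := by
            rw [Finset.sum_ite_eq F m (fun l => 2 * ε l k)]
            split_ifs
            · exact le_refl _
            · linarith [hεnn m k]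
          have p2 : (∑ l ∈ F, 8 * (ε l m * ε l k)) ≤ 8 * ((1/16) * ε m k) := by
            rw [← Finset.mul_sum]
            have hsub : ∑ l ∈ F, ε l m * ε l k ≤ ∑ l, ε l m * ε l k :=
              Finset.sum_le_sum_of_subset_of_nonneg (Finset.subset_univ F)
                (fun i _ _ => mul_nonneg (hεnn i m) (hεnn i k))
            have := hconv m k
            nlinarith
          linarith
        calc (∑ l ∈ F, 2 * ε l k *
              ((if m = l then 1 + 4 * ε l l else if ρ m < ρ l then 4 * ε m l else 0) * ‖W m j‖))
            ≤ ∑ l ∈ F, (2 * ε l k * ((if m = l then 1 else 0) + 4 * ε m l)) * ‖W m j‖ :=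
              Finset.sum_le_sum hterm
          _ = (∑ l ∈ F, 2 * ε l k * ((if m = l then 1 else 0) + 4 * ε m l)) * ‖W m j‖ :=
              (Finset.sum_mul _ _ _).symm
          _ ≤ ((5/2) * ε m k) * ‖W m j‖ :=
              mul_le_mul_of_nonneg_right coefbound (norm_nonneg _)
          _ = (5/2) * ε m k * ‖W m j‖ := by ring
      · rw [if_neg hm]
        refine le_of_eq (Finset.sum_eq_zero fun l hl => ?_)
        have h1 : m ≠ l := fun he => hm (he ▸ hmemF hl)
        have h2 : ¬ ρ m < ρ l := fun h => hm (h.trans (hmemF hl))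
        rw [if_neg h1, if_neg h2]
        ring
    calc ‖∑ l ∈ F, AUip (gsC ρ W l) (W k) * gsC ρ W l j‖
        ≤ ∑ l ∈ F, ‖AUip (gsC ρ W l) (W k)‖ * ‖gsC ρ W l j‖ := by
          refine (norm_sum_le _ _).trans (Finset.sum_le_sum fun l hl => ?_)
          rw [norm_mul]
      _ ≤ ∑ l ∈ F, 2 * ε l k * (∑ m, (if m = l then 1 + 4 * ε l l
            else if ρ m < ρ l then 4 * ε m l else 0) * ‖W m j‖) :=
          Finset.sum_le_sum fun l hl =>
            mul_le_mul (hcl l hl) (hentry l hl j) (norm_nonneg _)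
              (mul_nonneg (by norm_num) (hεnn l k))
      _ = ∑ m, (∑ l ∈ F, 2 * ε l k * ((if m = l then 1 + 4 * ε l l
            else if ρ m < ρ l then 4 * ε m l else 0) * ‖W m j‖)) := by
          rw [Finset.sum_congr rfl fun l (_ : l ∈ F) => Finset.mul_sum _ _ _,
            Finset.sum_comm]
      _ ≤ ∑ m, (if ρ m < ρ k then (5/2) * ε m k * ‖W m j‖ else 0) :=
          Finset.sum_le_sum fun m _ => claim m
      _ = ∑ m ∈ F, (5/2) * ε m k * ‖W m j‖ := (Finset.sum_filter _ _).symm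
  -- G1
  have hG1 : ∀ j, ‖gsC ρ W k j - W k j‖ ≤ 4 * ε k k * ‖W k j‖ +
      ∑ m ∈ Finset.univ.filter (fun m => ρ m < ρ k), 4 * ε m k * ‖W m j‖ := by
    intro j
    have hd : gsC ρ W k j - W k j = (((Real.sqrt t)⁻¹:ℝ):ℂ) * (gsV ρ W k j - W k j) +
        ((((Real.sqrt t)⁻¹:ℝ):ℂ) - 1) * W k j := by
      rw [congrFun hufun j]; ring
    have hn1 : ‖(((Real.sqrt t)⁻¹:ℝ):ℂ)‖ = (Real.sqrt t)⁻¹ :=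
      ((Complex.norm_real _).trans (Real.norm_eq_abs _)).trans (abs_of_nonneg hs0)
    have hn2 : ‖(((Real.sqrt t)⁻¹:ℝ):ℂ) - 1‖ = |(Real.sqrt t)⁻¹ - 1| := by
      rw [show ((((Real.sqrt t)⁻¹:ℝ):ℂ) - 1) = (((Real.sqrt t)⁻¹ - 1 : ℝ) : ℂ) by
        push_cast; ring]
      exact (Complex.norm_real _).trans (Real.norm_eq_abs _)
    calc ‖gsC ρ W k j - W k j‖
        ≤ ‖(((Real.sqrt t)⁻¹:ℝ):ℂ) * (gsV ρ W k j - W k j)‖ +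
          ‖((((Real.sqrt t)⁻¹:ℝ):ℂ) - 1) * W k j‖ := by rw [hd]; exact norm_add_le _ _
      _ = (Real.sqrt t)⁻¹ * ‖gsV ρ W k j - W k j‖ + |(Real.sqrt t)⁻¹ - 1| * ‖W k j‖ := by
          rw [norm_mul, norm_mul, hn1, hn2]
      _ ≤ (4/3) * (∑ m ∈ F, (5/2) * ε m k * ‖W m j‖) + (2 * ε k k) * ‖W k j‖ :=
          add_le_add (mul_le_mul hs43 (hvW j) (norm_nonneg _) (by norm_num))
            (mul_le_mul_of_nonneg_right hs1 (norm_nonneg _))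
      _ ≤ 4 * ε k k * ‖W k j‖ + ∑ m ∈ F, 4 * ε m k * ‖W m j‖ := by
          have hterm : (4/3) * (∑ m ∈ F, (5/2) * ε m k * ‖W m j‖)
              ≤ ∑ m ∈ F, 4 * ε m k * ‖W m j‖ := by
            rw [Finset.mul_sum]
            refine Finset.sum_le_sum fun m hm => ?_
            nlinarith [mul_nonneg (hεnn m k) (norm_nonneg (W m j))]
          nlinarith [mul_nonneg (hεnn k k) (norm_nonneg (W k j))]
  exact ⟨hG4, hG3, hG2, hG1⟩


set_option maxHeartbeats 1000000 in
theorem almost_unitary_correction (α β c : ℝ) (hα : 2 < α) (hβ : 0 ≤ β) (hc : 0 < c) :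
    ∃ N₀ : ℕ, ∀ N : ℕ, N₀ ≤ N →
      ∀ w : Matrix (Finset.Icc (-(N : ℤ)) (N : ℤ)) (Finset.Icc (-(N : ℤ)) (N : ℤ)) ℂ,
        (∀ j' j'' : Finset.Icc (-(N : ℤ)) (N : ℤ),
          ‖(∑ j : Finset.Icc (-(N : ℤ)) (N : ℤ), conj (w j j') * w j j'') -
              (if j' = j'' then 1 else 0)‖ ≤ eps c β α N j'.val j''.val) →
        ∃ u : Matrix (Finset.Icc (-(N : ℤ)) (N : ℤ)) (Finset.Icc (-(N : ℤ)) (N : ℤ)) ℂ,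
          u ∈ Matrix.unitaryGroup (Finset.Icc (-(N : ℤ)) (N : ℤ)) ℂ ∧
          ∀ j k : Finset.Icc (-(N : ℤ)) (N : ℤ),
            ‖u j k - w j k‖ ≤
              (4 * ∑ l : Finset.Icc (-(N : ℤ)) (N : ℤ),
                  if |l.val| ≤ |k.val| then eps c β α N l.val k.val else 0) * ‖w j k‖ +
              ∑ l : Finset.Icc (-(N : ℤ)) (N : ℤ),
                if -|k.val| ≤ l.val ∧ l.val < |k.val| ∧ l.val ≠ k.val then
                  4 * eps c β α N l.val k.val * ‖w j l‖ else 0 := by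
  refine ⟨Nat.ceil (32 * c), fun N hN w hw => ?_⟩
  have hc32 : 32 * c ≤ (N : ℝ) + 1 := by
    have h1 := Nat.le_ceil (32 * c)
    have h2 : ((Nat.ceil (32 * c) : ℕ) : ℝ) ≤ (N : ℝ) := Nat.cast_le.mpr hN
    linarith
  have hN1 : (0:ℝ) < (N : ℝ) + 1 := by positivity
  have hN0 : (1:ℝ) ≤ (N : ℝ) + 1 := by
    have : (0:ℝ) ≤ (N:ℝ) := Nat.cast_nonneg N
    linarith
  -- the data for AUkey
  have hρ : Function.Injective (fun k : ↥(Finset.Icc (-(N : ℤ)) (N : ℤ)) => rk k.val) :=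
    fun a b h => Subtype.ext (rk_inj h)
  have hεpos : ∀ a b : ↥(Finset.Icc (-(N : ℤ)) (N : ℤ)),
      0 < eps c β α N a.val b.val := fun a b => eps_pos c β α N hc _ _
  have hεsymm : ∀ a b : ↥(Finset.Icc (-(N : ℤ)) (N : ℤ)),
      eps c β α N a.val b.val = eps c β α N b.val a.val := fun a b => eps_symm c β α N _ _
  have hcN : c / ((N:ℝ)+1)^2 ≤ 1/32 := by
    rw [div_le_iff₀ (by positivity)]
    nlinarith
  have hεsmall : ∀ a b : ↥(Finset.Icc (-(N : ℤ)) (N : ℤ)),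
      eps c β α N a.val b.val ≤ 1/32 :=
    fun a b => (eps_le c β α N hc hβ hα _ _).trans hcN
  have hcard : ((Fintype.card ↥(Finset.Icc (-(N:ℤ)) (N:ℤ)) : ℕ) : ℝ) ≤ 2 * (N:ℝ) + 2 := by
    rw [Fintype.card_coe,
      show (Finset.Icc (-(N:ℤ)) (N:ℤ)).card = 2 * N + 1 by rw [Int.card_Icc]; omega]
    push_cast; linarith
  have hconv : ∀ a b : ↥(Finset.Icc (-(N : ℤ)) (N : ℤ)),
      (∑ m : ↥(Finset.Icc (-(N : ℤ)) (N : ℤ)), eps c β α N m.val a.val * eps c β α N m.val b.val)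
        ≤ (1/16) * eps c β α N a.val b.val := by
    intro a b
    have hεp := eps_pos c β α N hc a.val b.val
    have hXnn : (0:ℝ) ≤ c/((N:ℝ)+1)^2 := by positivity
    have h2 : (2 * (N:ℝ) + 2) * (c/((N:ℝ)+1)^2) ≤ 1/16 := by
      have he : (2 * (N:ℝ) + 2) * (c/((N:ℝ)+1)^2) = 2 * c/((N:ℝ)+1) := by
        field_simp
      rw [he, div_le_iff₀ hN1]
      linarith
    calc (∑ m : ↥(Finset.Icc (-(N : ℤ)) (N : ℤ)),
            eps c β α N m.val a.val * eps c β α N m.val b.val)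
        ≤ ∑ _m : ↥(Finset.Icc (-(N : ℤ)) (N : ℤ)), c/((N:ℝ)+1)^2 * eps c β α N a.val b.val :=
          Finset.sum_le_sum fun m _ => eps_mul c β α N hc hβ hα m.val a.val b.val
      _ = ((Fintype.card ↥(Finset.Icc (-(N:ℤ)) (N:ℤ)) : ℕ) : ℝ) *
            (c/((N:ℝ)+1)^2 * eps c β α N a.val b.val) := by
          rw [Finset.sum_const, nsmul_eq_mul, Finset.card_univ]
      _ ≤ (2 * (N:ℝ) + 2) * (c/((N:ℝ)+1)^2 * eps c β α N a.val b.val) :=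
          mul_le_mul_of_nonneg_right hcard (mul_nonneg hXnn hεp.le)
      _ = ((2 * (N:ℝ) + 2) * (c/((N:ℝ)+1)^2)) * eps c β α N a.val b.val := by ring
      _ ≤ (1/16) * eps c β α N a.val b.val := mul_le_mul_of_nonneg_right h2 hεp.le
  have hw' : ∀ a b : ↥(Finset.Icc (-(N : ℤ)) (N : ℤ)),
      ‖AUip (fun j => w j a) (fun j => w j b) - (if a = b then 1 else 0)‖
        ≤ eps c β α N a.val b.val := fun a b => hw a b
  have key := AUkey (fun k : ↥(Finset.Icc (-(N : ℤ)) (N : ℤ)) => rk k.val) hρ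
    (fun a b => eps c β α N a.val b.val) (fun k j => w j k)
    hεpos hεsymm hεsmall hconv hw'
  set u : ↥(Finset.Icc (-(N : ℤ)) (N : ℤ)) → ↥(Finset.Icc (-(N : ℤ)) (N : ℤ)) → ℂ :=
    gsC (fun k : ↥(Finset.Icc (-(N : ℤ)) (N : ℤ)) => rk k.val) (fun k j => w j k) with hu
  refine ⟨Matrix.of (fun j k => u k j), ?_, ?_⟩
  · -- unitarity
    rw [Matrix.mem_unitaryGroup_iff']
    apply Matrix.ext
    intro a b
    rw [Matrix.mul_apply, Matrix.one_apply]
    have hent : ∀ j, (star (Matrix.of (fun j k => u k j))) a j * (Matrix.of (fun j k => u k j)) j b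
        = conj (u a j) * u b j := by
      intro j
      rw [Matrix.star_apply, Matrix.of_apply, Matrix.of_apply]
      rfl
    rw [Finset.sum_congr rfl fun j _ => hent j]
    by_cases hab : a = b
    · subst hab
      rw [if_pos rfl]
      exact (key a).1
    · rw [if_neg hab]
      have hne : rk a.val ≠ rk b.val := fun h => hab (Subtype.ext (rk_inj h))
      rcases hne.lt_or_gt with h | h
      · have h0 := (key b).2.1 a h
        exact h0
      · have h0 := (key a).2.1 b h
        calc (∑ j, conj (u a j) * u b j) = AUip (u a) (u b) := rfl
          _ = conj (AUip (u b) (u a)) := AUip_conj _ _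
          _ = 0 := by rw [h0]; exact map_zero _
  · -- entrywise bound
    intro j k
    have hG1 := (key k).2.2.2 j
    have hstep1 : 4 * eps c β α N k.val k.val * ‖w j k‖ ≤
        (4 * ∑ l : ↥(Finset.Icc (-(N : ℤ)) (N : ℤ)),
          if |l.val| ≤ |k.val| then eps c β α N l.val k.val else 0) * ‖w j k‖ := by
      apply mul_le_mul_of_nonneg_right _ (norm_nonneg _)
      have hsingle : eps c β α N k.val k.val ≤
          ∑ l : ↥(Finset.Icc (-(N : ℤ)) (N : ℤ)),
            if |l.val| ≤ |k.val| then eps c β α N l.val k.val else 0 := by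
        have := Finset.single_le_sum (f := fun l : ↥(Finset.Icc (-(N : ℤ)) (N : ℤ)) =>
          if |l.val| ≤ |k.val| then eps c β α N l.val k.val else 0)
          (fun i _ => by
            split_ifs with h
            exacts [(eps_pos c β α N hc _ _).le, le_refl 0])
          (Finset.mem_univ k)
        rwa [if_pos (le_refl _)] at this
      linarith
    have hstep2 : (∑ m ∈ Finset.univ.filter
          (fun m : ↥(Finset.Icc (-(N : ℤ)) (N : ℤ)) => rk m.val < rk k.val),
          4 * eps c β α N m.val k.val * ‖w j m‖)
        = ∑ l : ↥(Finset.Icc (-(N : ℤ)) (N : ℤ)),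
            if -|k.val| ≤ l.val ∧ l.val < |k.val| ∧ l.val ≠ k.val then
              4 * eps c β α N l.val k.val * ‖w j l‖ else 0 := by
      rw [Finset.sum_filter]
      exact Finset.sum_congr rfl fun l _ =>
        if_congr (rk_lt_iff l.val k.val) rfl rfl
    calc ‖(Matrix.of (fun j k => u k j)) j k - w j k‖
        = ‖u k j - w j k‖ := by rw [Matrix.of_apply]
      _ ≤ 4 * eps c β α N k.val k.val * ‖w j k‖ +
          ∑ m ∈ Finset.univ.filter
            (fun m : ↥(Finset.Icc (-(N : ℤ)) (N : ℤ)) => rk m.val < rk k.val),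
            4 * eps c β α N m.val k.val * ‖w j m‖ := hG1
      _ ≤ (4 * ∑ l : ↥(Finset.Icc (-(N : ℤ)) (N : ℤ)),
            if |l.val| ≤ |k.val| then eps c β α N l.val k.val else 0) * ‖w j k‖ +
          ∑ l : ↥(Finset.Icc (-(N : ℤ)) (N : ℤ)),
            if -|k.val| ≤ l.val ∧ l.val < |k.val| ∧ l.val ≠ k.val then
              4 * eps c β α N l.val k.val * ‖w j l‖ else 0 := by
          rw [← hstep2]
          exact add_le_add hstep1 (le_refl _)
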